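/- Let c : ℝ → ℝ be nonnegative, nondecreasing, and concave on [0,∞), and let ξ ∈ [0, 1/2]. Then for all x ≥ 0 and w > 0: (1/2 + ξ) c(x+w) ≤ (1/w) ∫_x^{x+w} c(t) dt + ξ c(w) ≤ (1 + ξ) c(x+w). -/

import Mathlib

theorem concave_good_alpha (c : ℝ → ℝ)
    (hnonneg : ∀ t ∈ Set.Ici (0:ℝ), 0 ≤ c t)
    (hmono : MonotoneOn c (Set.Ici 0))
    (hconc : ConcaveOn ℝ (Set.Ici 0) c)
    (ξ : ℝ) (hξ0 : 0 ≤ ξ) (hξ1 : ξ ≤ 1 / 2) :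
    ∀ x w : ℝ, 0 ≤ x → 0 < w →
      (1 / 2 + ξ) * c (x + w) ≤ (1 / w) * (∫ t in x..(x + w), c t) + ξ * c w ∧
        (1 / w) * (∫ t in x..(x + w), c t) + ξ * c w ≤ (1 + ξ) * c (x + w) := by
  intro x w hx hw
  have hwne : w ≠ 0 := hw.ne'
  have hxw : (0:ℝ) ≤ x + w := by linarith
  have hle : x ≤ x + w := by linarith
  have hsub : Set.uIcc x (x + w) ⊆ Set.Ici (0:ℝ) := by
    rw [Set.uIcc_of_le hle]
    intro t ht; exact le_trans hx ht.1
  have hint : IntervalIntegrable c MeasureTheory.volume x (x + w) :=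
    (hmono.mono hsub).intervalIntegrable
  set d : ℝ := c (x + w) - c x with hd
  have hlin : ∀ t ∈ Set.Icc x (x + w), c x + d / w * (t - x) ≤ c t := by
    intro t ht
    have hb0 : 0 ≤ (t - x) / w := div_nonneg (by linarith [ht.1]) hw.le
    have ha0 : 0 ≤ (x + w - t) / w := div_nonneg (by linarith [ht.2]) hw.le
    have hab : (x + w - t) / w + (t - x) / w = 1 := by field_simp; ring
    have key := hconc.2 (Set.mem_Ici.2 hx) (Set.mem_Ici.2 hxw) ha0 hb0 hab
    simp only [smul_eq_mul] at key
    have ht' : (x + w - t) / w * x + (t - x) / w * (x + w) = t := by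
      field_simp; ring
    rw [ht'] at key
    have heq : c x + d / w * (t - x)
        = (x + w - t) / w * c x + (t - x) / w * c (x + w) := by
      field_simp [hd]; ring
    rw [heq]; exact key
  have h1 : (∫ t in x..(x + w), (t - x)) = w ^ 2 / 2 := by
    simp [integral_id]
    ring
  have hcont : IntervalIntegrable (fun t => d / w * (t - x))
      MeasureTheory.volume x (x + w) := by
    apply Continuous.intervalIntegrable; continuity
  have hlinint : (∫ t in x..(x + w), (c x + d / w * (t - x)))
      = w * (c x + c (x + w)) / 2 := by
    rw [intervalIntegral.integral_add intervalIntegrable_const hcont,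
      intervalIntegral.integral_const_mul, h1]
    simp only [intervalIntegral.integral_const, smul_eq_mul, hd]
    field_simp
    ring
  have hlower : w * (c x + c (x + w)) / 2 ≤ ∫ t in x..(x + w), c t := by
    rw [← hlinint]
    apply intervalIntegral.integral_mono_on hle _ hint hlin
    exact intervalIntegrable_const.add hcont
  have hupper : (∫ t in x..(x + w), c t) ≤ w * c (x + w) := by
    have h2 : (∫ t in x..(x + w), c t) ≤ ∫ _t in x..(x + w), c (x + w) :=
      intervalIntegral.integral_mono_on hle hint intervalIntegrable_const
        (fun t ht => hmono (le_trans hx ht.1) hxw ht.2)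
    simpa [mul_comm] using h2
  have hcw : c w ≤ c (x + w) := hmono (Set.mem_Ici.2 hw.le) (Set.mem_Ici.2 hxw) (by linarith)
  have hsubadd : c (x + w) - c w ≤ c x := by
    have hpos : 0 < x + w := by linarith
    have hb : (0:ℝ) ≤ w / (x + w) := div_nonneg hw.le hpos.le
    have ha : (0:ℝ) ≤ x / (x + w) := div_nonneg hx hpos.le
    have hab : x / (x + w) + w / (x + w) = 1 := by field_simp [hpos.ne']
    have hab' : w / (x + w) + x / (x + w) = 1 := by rw [add_comm]; field_simp [hpos.ne']
    have h1 := hconc.2 (Set.mem_Ici.2 (le_refl (0:ℝ))) (Set.mem_Ici.2 hxw) ha hb hab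
    have h2 := hconc.2 (Set.mem_Ici.2 (le_refl (0:ℝ))) (Set.mem_Ici.2 hxw) hb ha hab'
    simp only [smul_eq_mul, mul_zero, zero_add] at h1 h2
    have hw' : w / (x + w) * (x + w) = w := by field_simp [hpos.ne']
    have hx' : x / (x + w) * (x + w) = x := by field_simp [hpos.ne']
    rw [hw'] at h1
    rw [hx'] at h2
    have hc0 : 0 ≤ c 0 := hnonneg 0 (Set.mem_Ici.2 le_rfl)
    have hsplit : x / (x + w) * c (x + w) + w / (x + w) * c (x + w) = c (x + w) := by
      rw [← add_mul, hab, one_mul]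
    linarith [mul_nonneg ha hc0, mul_nonneg hb hc0]
  have hcx : 0 ≤ c x := hnonneg x hx
  have havg : (c x + c (x + w)) / 2 ≤ (1 / w) * ∫ t in x..(x + w), c t := by
    have h3 := mul_le_mul_of_nonneg_left hlower (le_of_lt (one_div_pos.2 hw))
    have e : (1 / w) * (w * (c x + c (x + w)) / 2) = (c x + c (x + w)) / 2 := by
      field_simp
    linarith
  constructor
  · have key : (1 / 2 + ξ) * c (x + w) - ξ * c w ≤ (c x + c (x + w)) / 2 := by
      nlinarith [mul_le_mul_of_nonneg_left hsubadd hξ0, hcx, hcw]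
    linarith
  · have h4 : (1 / w) * (∫ t in x..(x + w), c t) ≤ c (x + w) := by
      rw [one_div, inv_mul_le_iff₀ hw]
      linarith [hupper]
    nlinarith [hcw, hnonneg _ hxw]
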